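/- For the system x₁' = x₂·(¼(x₁²+x₂²-2)^p + 1), x₂' = -x₁·(¼(x₁²+x₂²-2)^p + 1) (p ∈ ℕ, p ≥ 1), the curves x̃_α(t) = α(sin(2πt/T(α)), cos(2πt/T(α))) with T(α) = 2π/(¼(α²-2)^p + 1) are periodic solutions, and at α₀ = √2 one has T(√2) = 2π, the derivatives T'(√2) = ⋯ = T^{(p-1)}(√2) = 0, and T^{(p)}(√2) ≠ 0. -/

import Mathlib

open Real

/-- Period function of the Yagasaki-type example: `T(α) = 2π/(¼(α²-2)^p + 1)`. -/
noncomputable def Tper (p : ℕ) (α : ℝ) : ℝ := 2 * π / ((α ^ 2 - 2) ^ p / 4 + 1)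

/-- Right-hand side of the system
`x₁' = x₂(¼(x₁²+x₂²-2)^p + 1)`, `x₂' = -x₁(¼(x₁²+x₂²-2)^p + 1)`. -/
noncomputable def yagRHS (p : ℕ) (v : Fin 2 → ℝ) : Fin 2 → ℝ :=
  ![v 1 * ((v 0 ^ 2 + v 1 ^ 2 - 2) ^ p / 4 + 1),
    -(v 0) * ((v 0 ^ 2 + v 1 ^ 2 - 2) ^ p / 4 + 1)]

/-- Equality of `iteratedDerivWithin` and `iteratedDeriv` on open sets. -/
lemma iteratedDerivWithin_eq_iteratedDeriv_of_isOpen {s : Set ℝ} (hs : IsOpen s) (f : ℝ → ℝ)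
    (n : ℕ) : Set.EqOn (iteratedDerivWithin n f s) (iteratedDeriv n f) s := by
  induction n with
  | zero => intro x hx; simp
  | succ n ih =>
    intro x hx
    rw [iteratedDerivWithin_succ, iteratedDeriv_succ,
      derivWithin_of_isOpen hs hx]
    apply Filter.EventuallyEq.deriv_eq
    filter_upwards [hs.mem_nhds hx] with y hy using ih hy

/-- Key computation: iterated derivatives of `u x * (x - a) ^ m` at `a`. -/
lemma key_iter {s : Set ℝ} (hs : IsOpen s) {a : ℝ} (ha : a ∈ s) :
    ∀ (k m : ℕ), k ≤ m → ∀ u : ℝ → ℝ, (∀ n : ℕ, ContDiffOn ℝ n u s) →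
      iteratedDerivWithin k (fun x => u x * (x - a) ^ m) s a
        = (m.descFactorial k : ℝ) * (0 : ℝ) ^ (m - k) * u a := by
  have hsu : UniqueDiffOn ℝ s := hs.uniqueDiffOn
  intro k
  induction k with
  | zero =>
    intro m _ u _
    simp [Nat.sub_zero]
    ring
  | succ k IH =>
    intro m hkm u hu
    obtain ⟨m', rfl⟩ : ∃ m', m = m' + 1 :=
      ⟨m - 1, (Nat.succ_pred_eq_of_pos (lt_of_lt_of_le k.succ_pos hkm)).symm⟩
    have hkm' : k ≤ m' := Nat.succ_le_succ_iff.mp hkm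
    have hpoly : ∀ (n j : ℕ), ContDiffOn ℝ n (fun x : ℝ => (x - a) ^ j) s := fun n j =>
      ((contDiff_id.sub contDiff_const).pow j).contDiffOn
    rw [iteratedDerivWithin_succ']
    have hcong : Set.EqOn (derivWithin (fun x => u x * (x - a) ^ (m' + 1)) s)
        (fun x => derivWithin u s x * (x - a) ^ (m' + 1)
          + ((m' : ℝ) + 1) * (u x * (x - a) ^ m')) s := by
      intro x hx
      rw [derivWithin_of_isOpen hs hx]
      have hu' : DifferentiableAt ℝ u x :=
        ((hu 1).contDiffAt (hs.mem_nhds hx)).differentiableAt (by norm_cast)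
      have h1 : HasDerivAt (fun x : ℝ => (x - a) ^ (m' + 1))
          (((m' : ℝ) + 1) * (x - a) ^ m') x := by
        simpa using ((hasDerivAt_id x).sub_const a).fun_pow (m' + 1)
      have h2 := hu'.hasDerivAt.fun_mul h1
      have hdw : derivWithin u s x = deriv u x := derivWithin_of_isOpen hs hx
      rw [h2.deriv]
      simp only [hdw]
      ring
    rw [iteratedDerivWithin_congr hcong ha]
    have hduc : ∀ n : ℕ, ContDiffOn ℝ n (derivWithin u s) s := fun n =>
      (hu (n + 1)).derivWithin hsu (by norm_cast)
    have ht1 : ContDiffOn ℝ k (fun x => derivWithin u s x * (x - a) ^ (m' + 1)) s :=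
      (hduc k).mul (hpoly k (m' + 1))
    have ht2 : ContDiffOn ℝ k (fun x => ((m' : ℝ) + 1) * (u x * (x - a) ^ m')) s :=
      (contDiffOn_const.mul ((hu k).mul (hpoly k m')))
    rw [show (fun x => derivWithin u s x * (x - a) ^ (m' + 1)
          + ((m' : ℝ) + 1) * (u x * (x - a) ^ m'))
        = (fun x => derivWithin u s x * (x - a) ^ (m' + 1))
          + (fun x => ((m' : ℝ) + 1) * (u x * (x - a) ^ m')) from rfl,
      iteratedDerivWithin_add ha hsu (ht1 a ha) (ht2 a ha),
      iteratedDerivWithin_const_mul ha hsu _ (((hu k).mul (hpoly k m')) a ha),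
      IH (m' + 1) (le_trans hkm' (Nat.le_succ m')) (derivWithin u s) hduc,
      IH m' hkm' u hu]
    have hz1 : (0 : ℝ) ^ (m' + 1 - k) = 0 := by
      have : m' + 1 - k = (m' - k) + 1 := by omega
      rw [this]; simp
    rw [hz1]
    have hdesc : ((m' + 1).descFactorial (k + 1) : ℝ)
        = ((m' : ℝ) + 1) * (m'.descFactorial k : ℝ) := by
      rw [Nat.succ_descFactorial_succ]; push_cast; ring
    have hsub : m' + 1 - (k + 1) = m' - k := by omega
    rw [hdesc, hsub]
    ring

/-- The curves `x̃_α(t) = α(sin(2πt/T(α)), cos(2πt/T(α)))` are `T(α)`-periodic solutions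
of the system, and at `α₀ = √2`: `T(√2) = 2π`, `T'(√2) = ⋯ = T^{(p-1)}(√2) = 0`, and
`T^{(p)}(√2) ≠ 0`. -/
theorem yagasaki_example_critical_period (p : ℕ) (hp : 1 ≤ p) :
    (∀ α : ℝ, (α ^ 2 - 2) ^ p / 4 + 1 ≠ 0 →
      (∀ t : ℝ, HasDerivAt
          (fun s => ![α * Real.sin (2 * π / Tper p α * s), α * Real.cos (2 * π / Tper p α * s)])
          (yagRHS p ![α * Real.sin (2 * π / Tper p α * t), α * Real.cos (2 * π / Tper p α * t)])
          t) ∧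
      (∀ t : ℝ,
        (![α * Real.sin (2 * π / Tper p α * (t + Tper p α)),
            α * Real.cos (2 * π / Tper p α * (t + Tper p α))] : Fin 2 → ℝ)
          = ![α * Real.sin (2 * π / Tper p α * t), α * Real.cos (2 * π / Tper p α * t)])) ∧
    Tper p (Real.sqrt 2) = 2 * π ∧
    (∀ k : ℕ, 1 ≤ k → k ≤ p - 1 → iteratedDeriv k (Tper p) (Real.sqrt 2) = 0) ∧
    iteratedDeriv p (Tper p) (Real.sqrt 2) ≠ 0 := by
  have hπ : (2 : ℝ) * π ≠ 0 := by positivity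
  have hs2 : Real.sqrt 2 ^ 2 = 2 := Real.sq_sqrt (by norm_num)
  constructor
  · -- the ODE part
    intro α hα
    have hT : Tper p α ≠ 0 := div_ne_zero hπ hα
    have hω : 2 * π / Tper p α = (α ^ 2 - 2) ^ p / 4 + 1 := by
      rw [Tper]; field_simp
    constructor
    · intro t
      set ω := 2 * π / Tper p α with hωdef
      have hsum : (α * Real.sin (ω * t)) ^ 2 + (α * Real.cos (ω * t)) ^ 2 = α ^ 2 := by
        have := Real.sin_sq_add_cos_sq (ω * t)
        nlinarith [this]
      have h1 : HasDerivAt (fun s : ℝ => α * Real.sin (ω * s)) (α * (Real.cos (ω * t) * ω)) t := by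
        have := ((Real.hasDerivAt_sin (ω * t)).comp t ((hasDerivAt_id t).const_mul ω)).const_mul α
        simpa [Function.comp] using this
      have h2 : HasDerivAt (fun s : ℝ => α * Real.cos (ω * s))
          (α * (-Real.sin (ω * t) * ω)) t := by
        have := ((Real.hasDerivAt_cos (ω * t)).comp t ((hasDerivAt_id t).const_mul ω)).const_mul α
        simpa [Function.comp] using this
      have hval : yagRHS p ![α * Real.sin (ω * t), α * Real.cos (ω * t)]
          = ![α * (Real.cos (ω * t) * ω), α * (-Real.sin (ω * t) * ω)] := by
        funext i
        fin_cases i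
        · show α * Real.cos (ω * t) *
            (((α * Real.sin (ω * t)) ^ 2 + (α * Real.cos (ω * t)) ^ 2 - 2) ^ p / 4 + 1)
              = α * (Real.cos (ω * t) * ω)
          rw [hsum, ← hω]
          ring
        · show -(α * Real.sin (ω * t)) *
            (((α * Real.sin (ω * t)) ^ 2 + (α * Real.cos (ω * t)) ^ 2 - 2) ^ p / 4 + 1)
              = α * (-Real.sin (ω * t) * ω)
          rw [hsum, ← hω]
          ring
      rw [hval]
      refine hasDerivAt_pi.2 ?_
      intro i
      fin_cases i
      · exact h1
      · exact h2
    · intro t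
      have harg : 2 * π / Tper p α * (t + Tper p α) = 2 * π / Tper p α * t + 2 * π := by
        field_simp
      rw [harg, Real.sin_add_two_pi, Real.cos_add_two_pi]
  · -- the period function part
    set a := Real.sqrt 2 with hadef
    have hTa : Tper p a = 2 * π := by
      rw [Tper, hs2]
      simp [zero_pow (by omega : p ≠ 0)]
    refine ⟨hTa, ?_⟩
    -- the open set where the denominator does not vanish
    set h : ℝ → ℝ := fun x => (x ^ 2 - 2) ^ p / 4 + 1 with hhdef
    have hcont : Continuous h := by fun_prop
    set s : Set ℝ := {x | h x ≠ 0} with hsdef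
    have hs : IsOpen s := isOpen_ne_fun hcont continuous_const
    have h22 : ((2 : ℝ) - 2) ^ p = 0 := by
      rw [show (2 : ℝ) - 2 = 0 by norm_num, zero_pow (by omega : p ≠ 0)]
    have ha : a ∈ s := by
      simp only [hsdef, Set.mem_setOf_eq, hhdef, hadef, hs2, h22]
      norm_num [zero_pow (by omega : p ≠ 0)]
    set u : ℝ → ℝ := fun x => -(π / 2) * (x + a) ^ p / h x with hudef
    have hu : ∀ n : ℕ, ContDiffOn ℝ n u s := by
      intro n
      apply ContDiffOn.div
      · exact (contDiffOn_const.mul ((contDiffOn_id.add contDiffOn_const).pow p))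
      · exact ((contDiffOn_id.pow 2).sub contDiffOn_const).pow p |>.div_const 4
          |>.add contDiffOn_const
      · intro x hx; exact hx
    have hfac : ∀ x : ℝ, (x - a) ^ p * (x + a) ^ p = (x ^ 2 - 2) ^ p := by
      intro x
      rw [← mul_pow]
      congr 1
      have : (x - a) * (x + a) = x ^ 2 - a ^ 2 := by ring
      rw [this, hadef, hs2]
    have heq : Tper p =ᶠ[nhds a] fun x => 2 * π + u x * (x - a) ^ p := by
      filter_upwards [hs.mem_nhds ha] with x hx
      have hxne : h x ≠ 0 := hx
      rw [Tper]
      show 2 * π / h x = 2 * π + -(π / 2) * (x + a) ^ p / h x * (x - a) ^ p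
      field_simp
      linear_combination hfac x
    have hiter : ∀ k : ℕ, 1 ≤ k → k ≤ p → iteratedDeriv k (Tper p) a
        = (p.descFactorial k : ℝ) * (0 : ℝ) ^ (p - k) * u a := by
      intro k hk hkp
      rw [heq.iteratedDeriv_eq k,
        ← iteratedDerivWithin_eq_iteratedDeriv_of_isOpen hs _ k ha,
        iteratedDerivWithin_const_add hk (2 * π),
        key_iter hs ha k p hkp u hu]
    have hua : u a = -(π / 2) * (2 * a) ^ p := by
      simp only [hudef, hhdef, hadef, hs2, h22]
      rw [show (Real.sqrt 2 + Real.sqrt 2 : ℝ) = 2 * Real.sqrt 2 by ring]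
      norm_num [zero_pow (by omega : p ≠ 0)]
    constructor
    · intro k hk1 hkp
      rw [hiter k hk1 (by omega)]
      have : (0 : ℝ) ^ (p - k) = 0 := by
        have : p - k = (p - k - 1) + 1 := by omega
        rw [this]; simp
      rw [this]; ring
    · rw [hiter p hp le_rfl, Nat.sub_self, pow_zero, Nat.descFactorial_self, hua]
      have h2a : ((2 : ℝ) * a) ^ p ≠ 0 := pow_ne_zero p (by rw [hadef]; positivity)
      have hfact : (p.factorial : ℝ) ≠ 0 := by positivity
      have hπ2 : (-(π / 2) : ℝ) ≠ 0 := by simp [Real.pi_ne_zero]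
      simp only [mul_one]
      exact mul_ne_zero hfact (mul_ne_zero hπ2 h2a)
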